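/- Exponential rewards case: let arm a have Gamma(n_a+1, Σ_a) prior on its rate θ_a, so the predictive mean reward is μ_a = Σ_a/n_a, and Ω = [0,∞). Suppose arm 1 dominates arm 2 (μ₁ > μ₂, n₁ < n₂). If Σ₁/(n₁+1) ≥ Σ₂/n₂ then the KG learning value of arm 1 is zero: for every possible reward y ≥ 0 on arm 1, (Σ₁+y)/(n₁+1) ≥ Σ₂/n₂, so max((Σ₁+y)/(n₁+1), Σ₂/n₂) = (Σ₁+y)/(n₁+1) and E[max(μ₁⁺, μ₂)] - μ₁ = 0. -/

import Mathlib

open MeasureTheory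

theorem exponential_kg_value_zero
    {Ω : Type*} [MeasurableSpace Ω] (μ : Measure Ω) [IsProbabilityMeasure μ]
    (S₁ n₁ S₂ n₂ : ℝ) (hS₁ : 0 < S₁) (hn₁ : 0 < n₁) (hS₂ : 0 < S₂) (hn₂ : 0 < n₂)
    (hdom₁ : S₁ / n₁ > S₂ / n₂) (hdom₂ : n₁ < n₂)
    (hcond : S₁ / (n₁ + 1) ≥ S₂ / n₂)
    (Y : Ω → ℝ) (hYint : Integrable Y μ) (hYpos : ∀ᵐ ω ∂μ, 0 ≤ Y ω)
    (hYmean : ∫ ω, Y ω ∂μ = S₁ / n₁) :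
    (∀ y : ℝ, 0 ≤ y →
      (S₁ + y) / (n₁ + 1) ≥ S₂ / n₂ ∧
      max ((S₁ + y) / (n₁ + 1)) (S₂ / n₂) = (S₁ + y) / (n₁ + 1)) ∧
    (∫ ω, max ((S₁ + Y ω) / (n₁ + 1)) (S₂ / n₂) ∂μ) - S₁ / n₁ = 0 := by
  have key : ∀ y : ℝ, 0 ≤ y → (S₁ + y) / (n₁ + 1) ≥ S₂ / n₂ := by
    intro y hy
    calc S₂ / n₂ ≤ S₁ / (n₁ + 1) := hcond
    _ ≤ (S₁ + y) / (n₁ + 1) := by gcongr; linarith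
  refine ⟨fun y hy => ⟨key y hy, max_eq_left (key y hy)⟩, ?_⟩
  have hcong : (∫ ω, max ((S₁ + Y ω) / (n₁ + 1)) (S₂ / n₂) ∂μ)
      = ∫ ω, (S₁ + Y ω) / (n₁ + 1) ∂μ := by
    refine integral_congr_ae ?_
    filter_upwards [hYpos] with ω hω
    exact max_eq_left (key (Y ω) hω)
  rw [hcong]
  have : (fun ω => (S₁ + Y ω) / (n₁ + 1)) = fun ω => S₁ / (n₁ + 1) + Y ω / (n₁ + 1) := by
    funext ω; ring
  rw [this, integral_add (integrable_const _) (hYint.div_const _),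
    integral_const, integral_div, hYmean]
  simp only [measure_univ, probReal_univ, ENNReal.toReal_one, smul_eq_mul, one_mul]
  field_simp
  ring
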